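/- Let Σ = L × Λ (L finite, Λ a finite abelian group), fix θ : L → Λ, and let K_θ be the set of words w in Σ^* such that for each a ∈ L, the sum of the Λ-components of w at positions whose L-component equals a is θ(a). Let x = (s, σ) ∈ K_θ of length n and define the ordered language L(x) = (s_1/σ_1) Π_1^* (s_2/σ_2) Π_2^* ⋯ (s_n/σ_n) Π_n^*, where Π_i = {s_1, …, s_i} × Λ. Then for every word y ∈ L(x) ∩ K_θ, one has x ≤ y in the weighted subword order (as in Theorem on Σ^* noetherianity). -/

import Mathlib

namespace Stmt18Aux

theorem zip_flatten_ofFn {α β : Type*} : ∀ {n : ℕ} (A : Fin n → List α) (B : Fin n → List β),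
    (∀ k, (A k).length = (B k).length) →
    ((List.ofFn A).flatten).zip ((List.ofFn B).flatten)
      = (List.ofFn fun k => (A k).zip (B k)).flatten
  | 0, A, B, h => by simp
  | n+1, A, B, h => by
    rw [List.ofFn_succ, List.ofFn_succ (f := B), List.ofFn_succ (f := fun k => (A k).zip (B k)),
      List.flatten_cons, List.flatten_cons, List.flatten_cons, List.zip_append (h 0),
      zip_flatten_ofFn _ _ (fun k => h k.succ)]

theorem filt_sum {L Λ : Type*} [DecidableEq L] [AddCommMonoid Λ] (a : L) (l : List (L × Λ)) :
    ((l.filter (fun c => c.1 = a)).map Prod.snd).sum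
      = (l.map (fun c => if c.1 = a then c.2 else 0)).sum := by
  induction l with
  | nil => simp
  | cons c l ih => by_cases h : c.1 = a <;> simp [List.filter_cons, h, ih]

theorem map_sum_fin {α Λ : Type*} [AddCommMonoid Λ] (l : List α) (h : α → Λ) :
    (l.map h).sum = ∑ p : Fin l.length, h (l.get p) := by
  rw [← List.ofFn_getElem_eq_map, List.sum_ofFn]
  simp [List.get_eq_getElem]

end Stmt18Aux


/-- The weighted subword order on words over `Σ = L × Λ` (see the noetherianity
theorem for `Σ^*`). -/
def WeightedWordLE {L Λ : Type*} [AddCommMonoid Λ] (x y : List (L × Λ)) : Prop :=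
  ∃ f : Fin y.length → Fin x.length,
    Function.Surjective f ∧
    (∀ i j : Fin x.length, i < j →
      ∃ b : Fin y.length, f b = i ∧ ∀ a : Fin y.length, f a = j → b < a) ∧
    (∀ a : Fin y.length, (y.get a).1 = (x.get (f a)).1) ∧
    (∀ i : Fin x.length,
      (x.get i).2 = ∑ a ∈ Finset.univ.filter (fun a => f a = i), (y.get a).2)

/-- `w ∈ K_θ` : for each `a ∈ L`, the `Λ`-components of `w` at positions whose
`L`-component is `a` sum to `θ a`. -/
def MemKtheta {L Λ : Type*} [DecidableEq L] [AddCommMonoid Λ] (θ : L → Λ)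
    (w : List (L × Λ)) : Prop :=
  ∀ a : L, ((w.filter (fun c => c.1 = a)).map Prod.snd).sum = θ a

/-- `y` lies in the ordered language
`L(x) = (s₁/σ₁) Π₁^* (s₂/σ₂) Π₂^* ⋯ (s_n/σ_n) Π_n^*`, where
`Π_i = {s₁, …, s_i} × Λ`. -/
def MemLangOf {L Λ : Type*} (x y : List (L × Λ)) : Prop :=
  ∃ w : Fin x.length → List (L × Λ),
    (∀ i : Fin x.length, ∀ c ∈ w i, ∃ j : Fin x.length, j ≤ i ∧ c.1 = (x.get j).1) ∧
    y = (List.ofFn fun i => x.get i :: w i).flatten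

/-- **Words of `L(x) ∩ K_θ` dominate `x`.** For `x ∈ K_θ` of length `n` and any
`y ∈ L(x) ∩ K_θ`, one has `x ≤ y` in the weighted subword order. -/
theorem stmt_18 {L Λ : Type*} [Fintype L] [DecidableEq L] [AddCommGroup Λ] [Fintype Λ]
    (θ : L → Λ) (x y : List (L × Λ))
    (hx : MemKtheta θ x) (hyL : MemLangOf x y) (hyK : MemKtheta θ y) :
    WeightedWordLE x y := by
  obtain ⟨w, hw, hy⟩ := hyL
  have hx : ∀ a : L, ((x.filter (fun c => c.1 = a)).map Prod.snd).sum = θ a := hx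
  have hyK : ∀ a : L, ((y.filter (fun c => c.1 = a)).map Prod.snd).sum = θ a := hyK
  classical
  let fo : (L × Λ) → ℕ := fun c => x.findIdx (fun d => d.1 = c.1)
  have hfo_lt : ∀ (k : Fin x.length) c, c ∈ w k → fo c < x.length := by
    intro k c hc
    obtain ⟨j, _, hj⟩ := hw k c hc
    refine List.findIdx_lt_length_of_exists ⟨x.get j, ?_, by simp [hj]⟩
    rw [List.get_eq_getElem]; exact List.getElem_mem _
  let fo' : Fin x.length → (L × Λ) → Fin x.length :=
    fun k c => if h : fo c < x.length then ⟨fo c, h⟩ else k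
  have hfo'_val : ∀ (k : Fin x.length) c, c ∈ w k → (fo' k c : ℕ) = fo c := by
    intro k c hc; simp [fo', hfo_lt k c hc]
  have hcomp1 : ∀ (k : Fin x.length) c, c ∈ w k → (x.get (fo' k c)).1 = c.1 := by
    intro k c hc
    have h1 : fo c < x.length := hfo_lt k c hc
    have h2 := List.findIdx_getElem (p := fun d : L × Λ => d.1 = c.1) (xs := x) (w := h1)
    simp only [decide_eq_true_eq] at h2
    simp only [fo', dif_pos h1, List.get_eq_getElem]
    exact h2
  have hfo_le : ∀ (k : Fin x.length) c, c ∈ w k → (fo' k c : ℕ) ≤ (k : ℕ) := by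
    intro k c hc
    obtain ⟨j, hjk, hj⟩ := hw k c hc
    rw [hfo'_val k c hc]
    have hfoj : fo c ≤ (j : ℕ) := by
      by_contra hcon
      push_neg at hcon
      have := List.not_of_lt_findIdx (p := fun d : L × Λ => d.1 = c.1) (xs := x) hcon
      simp only [decide_eq_false_iff_not, List.get_eq_getElem] at this hj
      exact this hj.symm
    exact le_trans hfoj hjk
  let G : Fin x.length → List (Fin x.length) := fun k => k :: (w k).map (fo' k)
  have hGlen : ∀ k, 0 < (G k).length := by intro k; simp [G]
  let Bb : Fin x.length → List (L × Λ) := fun k => x.get k :: w k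
  have hyB : y = (List.ofFn Bb).flatten := hy
  let F : List (Fin x.length) := (List.ofFn G).flatten
  have hlen : y.length = F.length := by
    rw [hyB]
    show ((List.ofFn Bb).flatten).length = ((List.ofFn G).flatten).length
    rw [List.length_flatten, List.length_flatten, List.map_ofFn, List.map_ofFn,
      List.sum_ofFn, List.sum_ofFn]
    refine Finset.sum_congr rfl fun k _ => ?_
    simp [Bb, G]
  let f : Fin y.length → Fin x.length := fun p => F.get (Fin.cast hlen p)
  have hzip : y.zip F = (List.ofFn fun k => (Bb k).zip (G k)).flatten := by
    rw [hyB]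
    exact Stmt18Aux.zip_flatten_ofFn Bb G (fun k => by simp [Bb, G])
  have hblk : ∀ k, (Bb k).zip (G k) = (x.get k, k) :: ((w k).map fun c => (c, fo' k c)) := by
    intro k
    show ((x.get k :: w k).zip (k :: (w k).map (fo' k))) = _
    rw [List.zip_cons_cons]
    congr 1
    have := List.zip_map' (f := id) (g := fo' k) (l := w k)
    simpa using this
  have hmemzip : ∀ p : Fin y.length, (y.get p, f p) ∈ y.zip F := by
    intro p
    have hp2 : (p : ℕ) < (y.zip F).length := by
      simp [List.length_zip, ← hlen, p.2]
    have heq : (y.zip F)[(p : ℕ)] = (y.get p, f p) := by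
      simp [List.getElem_zip, f, List.get_eq_getElem, Fin.cast]
    rw [← heq]
    exact List.getElem_mem _
  have hcomp : ∀ q ∈ y.zip F, q.1.1 = (x.get q.2).1 := by
    intro q hq
    rw [hzip, List.mem_flatten] at hq
    obtain ⟨l, hl, hql⟩ := hq
    rw [List.mem_ofFn] at hl
    obtain ⟨k, rfl⟩ := hl
    have hql' : q ∈ (Bb k).zip (G k) := hql
    rw [hblk k] at hql'
    rcases List.mem_cons.mp hql' with h | h
    · rw [h]
    · rw [List.mem_map] at h
      obtain ⟨c, hc, rfl⟩ := h
      exact (hcomp1 k c hc).symm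
  -- offsets
  let Ls : List ℕ := (List.ofFn G).map List.length
  have hLs_len : Ls.length = x.length := by simp [Ls]
  let ofs : ℕ → ℕ := fun m => (Ls.take m).sum
  have hofs_len : ∀ m : ℕ, (((List.ofFn G).take m).flatten).length = ofs m := by
    intro m
    show _ = (Ls.take m).sum
    rw [List.length_flatten]
    show ((List.map List.length ((List.ofFn G).take m))).sum = _
    rw [List.map_take]
  have hdecomp : ∀ (m : ℕ) (h : m < x.length),
      F = ((List.ofFn G).take m).flatten ++ (G ⟨m, h⟩ :: (List.ofFn G).drop (m + 1)).flatten := by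
    intro m h
    conv_lhs => rw [show F = (List.ofFn G).flatten from rfl,
      ← List.take_append_drop m (List.ofFn G)]
    rw [List.flatten_append]
    congr 2
    rw [List.drop_eq_getElem_cons (by simpa using h)]
    simp
  have hofs_mono : ∀ m m' : ℕ, m ≤ m' → ofs m ≤ ofs m' := by
    intro m m' h
    have h1 : (Ls.take m').take m = Ls.take m := by rw [List.take_take, min_eq_left h]
    show (Ls.take m).sum ≤ (Ls.take m').sum
    calc (Ls.take m).sum = ((Ls.take m').take m).sum := by rw [h1]
      _ ≤ ((Ls.take m').take m).sum + ((Ls.take m').drop m).sum := Nat.le_add_right _ _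
      _ = (Ls.take m').sum := by rw [← List.sum_append, List.take_append_drop]
  have hofs_succ : ∀ (m : ℕ) (h : m < x.length), ofs (m + 1) = ofs m + (G ⟨m, h⟩).length := by
    intro m h
    have hm : m < Ls.length := by rw [hLs_len]; exact h
    show (Ls.take (m+1)).sum = (Ls.take m).sum + _
    rw [List.sum_take_succ Ls m hm]
    congr 1
    simp [Ls]
  have hofs_lt : ∀ i j : Fin x.length, i < j → ofs i < ofs j := by
    intro i j hij
    have h1 : ofs ((i : ℕ) + 1) = ofs i + (G ⟨i, i.2⟩).length := hofs_succ i i.2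
    have h2 : ofs ((i : ℕ) + 1) ≤ ofs j := hofs_mono _ _ hij
    have h3 := hGlen ⟨i, i.2⟩
    omega
  have hFofs : ∀ i : Fin x.length, F[(ofs (i : ℕ))]? = some i := by
    intro i
    rw [hdecomp i i.2, List.getElem?_append_right (by rw [hofs_len]),
      hofs_len, Nat.sub_self, List.flatten_cons,
      List.getElem?_append_left (by simpa using hGlen i)]
    show (G ⟨(i : ℕ), i.2⟩)[0]? = some i
    simp [G]
  have hofslt : ∀ i : Fin x.length, ofs (i : ℕ) < F.length := by
    intro i
    have := hFofs i
    by_contra hcon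
    push_neg at hcon
    rw [List.getElem?_eq_none hcon] at this
    cases this
  have hbig : ∀ (j : Fin x.length) (p : ℕ), F[p]? = some j → ofs (j : ℕ) ≤ p := by
    intro j p hpj
    by_contra hcon
    push_neg at hcon
    have hpA : p < (((List.ofFn G).take (j : ℕ)).flatten).length := by
      rw [hofs_len]; exact hcon
    rw [hdecomp j j.2, List.getElem?_append_left hpA] at hpj
    have hmem : j ∈ ((List.ofFn G).take (j : ℕ)).flatten := List.mem_of_getElem? hpj
    rw [List.mem_flatten] at hmem
    obtain ⟨l, hl, hjl⟩ := hmem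
    rw [List.mem_iff_getElem] at hl
    obtain ⟨m, hmlen, hlm⟩ := hl
    have hmj : m < (j : ℕ) := by
      simp [List.length_take] at hmlen
      omega
    have hmx : m < x.length := lt_trans hmj j.2
    have hlG : l = G ⟨m, hmx⟩ := by
      rw [← hlm, List.getElem_take]
      simp
    rw [hlG] at hjl
    rcases List.mem_cons.mp hjl with h | h
    · have : (j : ℕ) = m := by rw [h]
      omega
    · rw [List.mem_map] at h
      obtain ⟨c, hc, hcj⟩ := h
      have h6 := hfo_le ⟨m, hmx⟩ c hc
      rw [hcj] at h6
      simp only [Fin.val_mk] at h6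
      omega
  have hfval : ∀ (a : Fin y.length), f a = F[(a : ℕ)]'(by rw [← hlen]; exact a.2) := by
    intro a; rfl
  refine ⟨f, ?_, ?_, ?_, ?_⟩
  · -- surjective
    intro i
    have hiF : i ∈ F := by
      refine List.mem_flatten.mpr ⟨G i, ?_, ?_⟩
      · exact List.mem_ofFn.mpr ⟨i, rfl⟩
      · exact List.mem_cons_self
    rw [List.mem_iff_getElem] at hiF
    obtain ⟨p, hp, hpv⟩ := hiF
    exact ⟨⟨p, by rw [hlen]; exact hp⟩, hpv⟩
  · -- order
    intro i j hij
    refine ⟨⟨ofs (i : ℕ), by rw [hlen]; exact hofslt i⟩, ?_, ?_⟩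
    · show F[(ofs (i : ℕ))]'(hofslt i) = i
      have := hFofs i
      rw [List.getElem?_eq_getElem (hofslt i)] at this
      exact Option.some.inj this
    · intro a ha
      have haj : F[(a : ℕ)]? = some j := by
        rw [List.getElem?_eq_getElem (by rw [← hlen]; exact a.2), ← hfval a, ha]
      have h1 : ofs (j : ℕ) ≤ (a : ℕ) := hbig j a haj
      have h2 : ofs (i : ℕ) < ofs (j : ℕ) := hofs_lt i j hij
      show (ofs (i : ℕ) : ℕ) < (a : ℕ)
      omega
  · -- components
    intro a
    exact hcomp _ (hmemzip a)
  · -- sums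
    intro i
    have step1 : ∑ a ∈ Finset.univ.filter (fun a => f a = i), (y.get a).2
        = ∑ a : Fin y.length, if f a = i then (y.get a).2 else 0 := Finset.sum_filter _ _
    have step2 : (List.ofFn fun a : Fin y.length => if f a = i then (y.get a).2 else 0)
        = (y.zip F).map (fun q => if q.2 = i then q.1.2 else 0) := by
      apply List.ext_getElem
      · simp [List.length_zip, ← hlen]
      · intro m h1 h2
        simp [List.getElem_ofFn, List.getElem_map, List.getElem_zip, f,
          List.get_eq_getElem, Fin.cast]
    have step3 : ((y.zip F).map (fun q => if q.2 = i then q.1.2 else 0)).sum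
        = ∑ k : Fin x.length,
            ((if k = i then (x.get k).2 else 0)
              + ((w k).map (fun c => if fo' k c = i then c.2 else 0)).sum) := by
      rw [hzip, List.map_flatten, List.sum_flatten, List.map_map, List.map_ofFn, List.sum_ofFn]
      refine Finset.sum_congr rfl (fun k _ => ?_)
      show ((((Bb k).zip (G k)).map (fun q => if q.2 = i then q.1.2 else 0))).sum = _
      rw [hblk k, List.map_cons, List.sum_cons, List.map_map]
      rfl
    have hE : ∑ k : Fin x.length,
        ((w k).map (fun c => if fo' k c = i then c.2 else 0)).sum = 0 := by
      by_cases hcase : x.findIdx (fun d => d.1 = (x.get i).1) = (i : ℕ)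
      · -- i is the first occurrence of its letter
        set a : L := (x.get i).1 with ha
        have hinner : ∀ k : Fin x.length,
            ((w k).map (fun c => if fo' k c = i then c.2 else 0)).sum
              = ((w k).map (fun c => if c.1 = a then c.2 else 0)).sum := by
          intro k
          congr 1
          apply List.map_congr_left
          intro c hc
          by_cases hc1 : c.1 = a
          · have hfoi : fo' k c = i := by
              apply Fin.ext
              rw [hfo'_val k c hc]
              show x.findIdx (fun d => d.1 = c.1) = (i : ℕ)
              rw [hc1]
              exact hcase
            simp [hfoi, hc1]
          · have hfoi : fo' k c ≠ i := by
              intro hcon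
              apply hc1
              rw [← hcomp1 k c hc, hcon]
            simp [hfoi, hc1]
        have hxa : ∑ k : Fin x.length, (if (x.get k).1 = a then (x.get k).2 else 0) = θ a := by
          have := hx a
          rw [Stmt18Aux.filt_sum, Stmt18Aux.map_sum_fin] at this
          exact this
        have hya : (∑ k : Fin x.length, (if (x.get k).1 = a then (x.get k).2 else 0))
            + (∑ k : Fin x.length, ((w k).map (fun c => if c.1 = a then c.2 else 0)).sum)
            = θ a := by
          have hthis := hyK a
          rw [Stmt18Aux.filt_sum, hyB, List.map_flatten, List.sum_flatten, List.map_map,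
            List.map_ofFn, List.sum_ofFn] at hthis
          rw [← Finset.sum_add_distrib, ← hthis]
          refine Finset.sum_congr rfl (fun k _ => ?_)
          show _ = ((Bb k).map (fun c => if c.1 = a then c.2 else 0)).sum
          show _ = ((x.get k :: w k).map (fun c => if c.1 = a then c.2 else 0)).sum
          rw [List.map_cons, List.sum_cons]
        simp only [hinner]
        rw [hxa] at hya
        exact add_eq_left.mp hya
      · -- i is not a first occurrence: all terms vanish
        refine Finset.sum_eq_zero (fun k _ => ?_)
        refine List.sum_eq_zero (fun v hv => ?_)
        rw [List.mem_map] at hv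
        obtain ⟨c, hc, rfl⟩ := hv
        rw [if_neg]
        intro hcon
        apply hcase
        have h1 : fo c = (i : ℕ) := by rw [← hfo'_val k c hc, hcon]
        have h2 : (x.get i).1 = c.1 := by rw [← hcomp1 k c hc, hcon]
        show x.findIdx (fun d => d.1 = (x.get i).1) = (i : ℕ)
        rw [h2]
        exact h1
    rw [step1, ← List.sum_ofFn, step2, step3, Finset.sum_add_distrib, hE, add_zero,
      Finset.sum_ite_eq' Finset.univ i (fun k => (x.get k).2)]
    simp
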